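/- arXiv:1203.0373 — 2 statements merged into one kernel-verified Lean document; each statement's English description precedes it below -/
import Mathlib

section
/- Let (X,d) be a complete metric space with a Borel-regular measure μ that is exponentially locally doubling, equipped with a truncated dyadic structure with truncation generation J, and fix t₀ ≤ δ^J. For 0 < t ≤ t₀ let A_t denote the dyadic averaging operator, defined on u ∈ L²(X,μ;ℂ^N) by A_t u(x) = (1/μ(Q)) ∫_Q u dμ whenever x ∈ Q ∈ Δ_t. Let ν be a positive Borel measure on X × (0,t₀] with finite Carleson norm ‖ν‖_C = sup{ ν(R_Q)/μ(Q) : Q ∈ Δ_t, t ≤ t₀ }, where R_Q = closure(Q) × (0, ℓ(Q)] is the Carleson box over Q. Then there is a constant C, depending only on the doubling and dyadic constants, such that ∬_{X×(0,t₀]} |A_t u(x)|² dν(x,t) ≤ C ‖ν‖_C ‖u‖²_{L²(X;ℂ^N)} for all u ∈ L²(X,μ;ℂ^N). -/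
open MeasureTheory Metric
open scoped ENNReal NNReal

/-- A *truncated dyadic structure* on a metric measure space `(X, d, μ)`. -/
structure TruncatedDyadicStructure (X : Type*) [MetricSpace X] [MeasurableSpace X]
    (μ : Measure X) where
  idx : ℕ → Set ℕ
  Q : ℕ → ℕ → Set X
  z : ℕ → ℕ → X
  δ : ℝ
  a₀ : ℝ
  η : ℝ
  C₁ : ℝ
  C₂ : ℝ
  δ_pos : 0 < δ
  δ_lt_one : δ < 1
  a₀_pos : 0 < a₀
  η_pos : 0 < η
  C₁_pos : 0 < C₁
  C₂_pos : 0 < C₂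
  isOpen : ∀ k, ∀ α ∈ idx k, IsOpen (Q k α)
  centre_mem : ∀ k, ∀ α ∈ idx k, z k α ∈ Q k α
  covers : ∀ k, μ (Set.univ \ ⋃ α ∈ idx k, Q k α) = 0
  nested : ∀ k l, k ≤ l → ∀ α ∈ idx k, ∀ β ∈ idx l,
    Q l β ⊆ Q k α ∨ Q l β ∩ Q k α = ∅
  ancestor : ∀ k, ∀ α ∈ idx k, ∀ l < k, ∃! β, β ∈ idx l ∧ Q k α ⊆ Q l β
  diam_le : ∀ k, ∀ α ∈ idx k, Metric.diam (Q k α) ≤ C₁ * δ ^ k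
  ball_subset : ∀ k, ∀ α ∈ idx k, ball (z k α) (a₀ * δ ^ k) ⊆ Q k α
  small_boundary : ∀ k, ∀ α ∈ idx k, ∀ t > (0 : ℝ),
    μ {x ∈ Q k α | EMetric.infEdist x (Q k α)ᶜ ≤ ENNReal.ofReal (t * δ ^ k)}
      ≤ ENNReal.ofReal (C₂ * t ^ η) * μ (Q k α)

namespace TruncatedDyadicStructure

variable {X : Type*} [MetricSpace X] [MeasurableSpace X] {μ : Measure X}

/-- The generation associated to a scale `t`: the unique `j` with `δ^(j+1) < t ≤ δ^j`
(for `0 < t ≤ δ^J` this is well defined and `≥ J`); thus `Δ_t = Δ^(gen t)`. -/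
noncomputable def gen (D : TruncatedDyadicStructure X μ) (t : ℝ) : ℕ :=
  sSup {j : ℕ | t ≤ D.δ ^ j}

/-- The dyadic averaging operator `A_t`: `A_t u (x) = ⨍_Q u dμ` whenever
`x ∈ Q ∈ Δ_t`, and `0` if `x` lies in no cube of the generation of `t`. -/
noncomputable def dyadicAvg (D : TruncatedDyadicStructure X μ) {E : Type*}
    [NormedAddCommGroup E] [NormedSpace ℝ E]
    (u : X → E) (t : ℝ) (x : X) : E :=
  open scoped Classical in
  if h : ∃ α ∈ D.idx (D.gen t), x ∈ D.Q (D.gen t) α then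
    ⨍ y in D.Q (D.gen t) h.choose, u y ∂μ
  else 0

end TruncatedDyadicStructure

namespace CarlesonAux

private lemma tsum_ite_zpow_eq (N : ℤ) :
    ∑' n : ℤ, (if n ≤ N then (2:ℝ≥0∞)^(n+3) else 0) = 2^(N+4) := by
  have h2 : (2:ℝ≥0∞) ≠ 0 := two_ne_zero
  have h2' : (2:ℝ≥0∞) ≠ ⊤ := ENNReal.ofNat_ne_top
  have hinj : Function.Injective (fun k : ℕ => N - (k:ℤ)) := by
    intro a b hab; simp only [sub_right_inj, Nat.cast_inj] at hab; exact hab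
  have hsupp : Function.support (fun n : ℤ => (if n ≤ N then (2:ℝ≥0∞)^(n+3) else 0))
      ⊆ Set.range (fun k : ℕ => N - (k:ℤ)) := by
    intro n hn
    simp only [Function.mem_support, ne_eq, ite_eq_right_iff, not_forall] at hn
    obtain ⟨hle, -⟩ := hn
    exact ⟨(N - n).toNat, by simp only []; omega⟩
  rw [← hinj.tsum_eq hsupp]
  have : ∀ k : ℕ, (if N - (k:ℤ) ≤ N then (2:ℝ≥0∞)^(N - (k:ℤ)+3) else 0)
      = 2^(N+3) * (2⁻¹)^k := by
    intro k
    rw [if_pos (by omega)]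
    rw [show N - (k:ℤ) + 3 = (N+3) + (-(k:ℤ)) by ring, ENNReal.zpow_add h2 h2',
      ENNReal.zpow_neg, zpow_natCast, ← ENNReal.inv_pow]
  simp only [this]
  rw [ENNReal.tsum_mul_left, ENNReal.tsum_geometric, ENNReal.one_sub_inv_two, inv_inv]
  have h4 : (2:ℝ≥0∞)^(N+4) = 2^(N+3) * 2^(1:ℤ) := by
    rw [← ENNReal.zpow_add h2 h2']; congr 1; ring
  rw [h4, zpow_one]

private lemma sq_le_tsum_layers (a : ℝ≥0∞) :
    a^2 ≤ ∑' n : ℤ, (if (2:ℝ≥0∞)^n < a then (2:ℝ≥0∞)^(2*n+2) else 0) := by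
  have h2 : (2:ℝ≥0∞) ≠ 0 := two_ne_zero
  have h2' : (2:ℝ≥0∞) ≠ ⊤ := ENNReal.ofNat_ne_top
  rcases eq_or_ne a 0 with rfl | ha0
  · simp
  rcases eq_or_ne a ⊤ with rfl | hatop
  · -- RHS is infinite
    by_contra h
    push_neg at h
    have hlt : ∑' n : ℤ, (if (2:ℝ≥0∞)^n < ⊤ then (2:ℝ≥0∞)^(2*n+2) else 0) < ⊤ :=
      lt_of_lt_of_le h le_top
    obtain ⟨m, hm⟩ := ENNReal.exists_nat_gt hlt.ne
    have hterm : (2:ℝ≥0∞)^(2*(m:ℤ)+2) ≤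
        ∑' n : ℤ, (if (2:ℝ≥0∞)^n < ⊤ then (2:ℝ≥0∞)^(2*n+2) else 0) := by
      have := ENNReal.le_tsum
        (f := fun n : ℤ => (if (2:ℝ≥0∞)^n < ⊤ then (2:ℝ≥0∞)^(2*n+2) else 0)) (m:ℤ)
      rwa [if_pos (ENNReal.zpow_lt_top h2 h2' _)] at this
    have hm2 : ((m:ℝ≥0∞)) ≤ 2^(2*(m:ℤ)+2) := by
      calc (m:ℝ≥0∞) ≤ 2^m := by
              exact_mod_cast (Nat.lt_two_pow_self (n := m)).le
        _ = 2^(m:ℤ) := by rw [← zpow_natCast]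
        _ ≤ 2^(2*(m:ℤ)+2) := ENNReal.zpow_le_of_le one_le_two (by omega)
    exact absurd (hm2.trans hterm) (not_le.mpr hm)
  · obtain ⟨m, hm1, hm2⟩ := ENNReal.exists_mem_Ioc_zpow ha0 hatop ENNReal.one_lt_two h2'
    calc a^2 ≤ (2^(m+1))^2 := pow_le_pow_left₀ (zero_le) hm2 2
      _ = 2^(2*m+2) := by
          rw [sq, ← ENNReal.zpow_add h2 h2']; ring_nf
      _ ≤ _ := by
          have := ENNReal.le_tsum
            (f := fun n : ℤ => (if (2:ℝ≥0∞)^n < a then (2:ℝ≥0∞)^(2*n+2) else 0)) m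
          rwa [if_pos hm1] at this

private lemma tsum_layers_le (a : ℝ≥0∞) :
    ∑' n : ℤ, (if (2:ℝ≥0∞)^(n-1) < a then (2:ℝ≥0∞)^(n+3) else 0) ≤ 32 * a := by
  have h2 : (2:ℝ≥0∞) ≠ 0 := two_ne_zero
  have h2' : (2:ℝ≥0∞) ≠ ⊤ := ENNReal.ofNat_ne_top
  rcases eq_or_ne a 0 with rfl | ha0
  · simp
  rcases eq_or_ne a ⊤ with rfl | hatop
  · rw [ENNReal.mul_top (by norm_num)]; exact le_top
  obtain ⟨m, hm1, hm2⟩ := ENNReal.exists_mem_Ioc_zpow ha0 hatop ENNReal.one_lt_two h2'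
  calc ∑' n : ℤ, (if (2:ℝ≥0∞)^(n-1) < a then (2:ℝ≥0∞)^(n+3) else 0)
      ≤ ∑' n : ℤ, (if n ≤ m + 1 then (2:ℝ≥0∞)^(n+3) else 0) := by
        apply ENNReal.tsum_le_tsum
        intro n
        by_cases hn : n ≤ m + 1
        · rw [if_pos hn]; split_ifs <;> simp
        · rw [if_neg hn, if_neg]
          intro hlt
          have : a ≤ (2:ℝ≥0∞)^(n-1) :=
            hm2.trans (ENNReal.zpow_le_of_le one_le_two (by omega))
          exact absurd (lt_of_lt_of_le hlt this) (lt_irrefl _)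
    _ = 2^(m+5) := by rw [tsum_ite_zpow_eq]; congr 1; ring
    _ = 32 * 2^m := by
        rw [show m + 5 = (5:ℤ) + m by ring, ENNReal.zpow_add h2 h2']
        congr 1
        rw [show (5:ℤ) = ((5:ℕ):ℤ) by norm_num, zpow_natCast]
        norm_num
    _ ≤ 32 * a := mul_le_mul_right hm1.le _

variable {X : Type*} [MetricSpace X] [MeasurableSpace X] {μ : Measure X}

lemma gen_facts (D : TruncatedDyadicStructure X μ) {t : ℝ} {m : ℕ}
    (ht : 0 < t) (htm : t ≤ D.δ ^ m) :
    m ≤ D.gen t ∧ t ≤ D.δ ^ D.gen t ∧ D.δ ^ (D.gen t + 1) < t := by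
  have hδ0 := D.δ_pos
  have hδ1 := D.δ_lt_one
  set s : Set ℕ := {j : ℕ | t ≤ D.δ ^ j} with hs
  have hbdd : BddAbove s := by
    obtain ⟨j₀, hj₀⟩ : ∃ j₀ : ℕ, D.δ ^ j₀ < t := by
      have htend := tendsto_pow_atTop_nhds_zero_of_lt_one hδ0.le hδ1
      exact (htend.eventually (gt_mem_nhds ht)).exists
    refine ⟨j₀, fun j hj => ?_⟩
    by_contra hjj
    push_neg at hjj
    have : D.δ ^ j ≤ D.δ ^ j₀ := pow_le_pow_of_le_one hδ0.le hδ1.le hjj.le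
    exact absurd (lt_of_lt_of_le hj₀ (le_trans hj this)) (lt_irrefl _)
  have hmem : m ∈ s := htm
  have hne : s.Nonempty := ⟨m, hmem⟩
  have hsup : D.gen t = sSup s := rfl
  have h2 : D.gen t ∈ s := by rw [hsup]; exact Nat.sSup_mem hne hbdd
  have h3 : D.gen t + 1 ∉ s := by
    intro h
    have := le_csSup hbdd h
    rw [← hsup] at this
    omega
  exact ⟨by rw [hsup]; exact le_csSup hbdd hmem, h2, lt_of_not_ge h3⟩

open Classical in
lemma disjoint_subfamily (D : TruncatedDyadicStructure X μ) :
    ∀ F : Finset (ℕ × ℕ), (∀ p ∈ F, p.2 ∈ D.idx p.1) →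
      ∃ F' ⊆ F,
        (∀ p ∈ F', ∀ q ∈ F', p ≠ q → D.Q p.1 p.2 ∩ D.Q q.1 q.2 = ∅) ∧
        (∀ p ∈ F, ∃ q ∈ F', D.Q p.1 p.2 ⊆ D.Q q.1 q.2 ∧ q.1 ≤ p.1) := by
  intro F
  induction F using Finset.strongInduction with
  | _ F ih =>
    intro hF
    rcases F.eq_empty_or_nonempty with rfl | hFne
    · exact ⟨∅, Finset.Subset.refl _, by simp, by simp⟩
    obtain ⟨p₁, hp₁F, hp₁max⟩ := Set.Finite.exists_maximalFor
      (fun p : ℕ × ℕ => D.Q p.1 p.2) (↑F : Set (ℕ × ℕ)) F.finite_toSet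
      (by exact_mod_cast hFne)
    set S : Set X := D.Q p₁.1 p₁.2 with hS
    set R : Finset (ℕ × ℕ) := F.filter (fun p => D.Q p.1 p.2 = S) with hR
    have hp₁R : p₁ ∈ R := by
      rw [hR, Finset.mem_filter]; exact ⟨hp₁F, rfl⟩
    have hRne : (R.image Prod.fst).Nonempty := ⟨p₁.1, Finset.mem_image_of_mem _ hp₁R⟩
    obtain ⟨p₀, hp₀R, hp₀k⟩ := Finset.mem_image.mp ((R.image Prod.fst).min'_mem hRne)
    have hp₀F : p₀ ∈ F := (Finset.filter_subset _ _) hp₀R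
    have hp₀S : D.Q p₀.1 p₀.2 = S := (Finset.mem_filter.mp hp₀R).2
    have hSmax : ∀ q ∈ F, S ⊆ D.Q q.1 q.2 → S = D.Q q.1 q.2 := by
      intro q hq hsub
      exact le_antisymm hsub (hp₁max hq hsub)
    set F₁ : Finset (ℕ × ℕ) := F.filter (fun p => ¬ D.Q p.1 p.2 ⊆ S) with hF₁
    have hp₀notF₁ : p₀ ∉ F₁ := by
      rw [hF₁, Finset.mem_filter]
      rintro ⟨-, hq⟩
      exact hq (hp₀S.le)
    have hssub : F₁ ⊂ F :=
      Finset.ssubset_iff_of_subset (Finset.filter_subset _ _) |>.mpr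
        ⟨p₀, hp₀F, hp₀notF₁⟩
    obtain ⟨F₁', hF₁'sub, hdisj₁, hcov₁⟩ := ih F₁ hssub
      (fun p hp => hF p ((Finset.filter_subset _ _) hp))
    have hdisjS : ∀ q ∈ F₁', D.Q q.1 q.2 ∩ S = ∅ := by
      intro q hq
      have hqF₁ : q ∈ F₁ := hF₁'sub hq
      have hqF : q ∈ F := (Finset.filter_subset _ _) hqF₁
      have hqns : ¬ D.Q q.1 q.2 ⊆ S := (Finset.mem_filter.mp hqF₁).2
      rcases le_total p₀.1 q.1 with hkl | hkl
      · rcases D.nested p₀.1 q.1 hkl p₀.2 (hF p₀ hp₀F) q.2 (hF q hqF) with hsub | hdj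
        · rw [hp₀S] at hsub; exact absurd hsub hqns
        · rw [hp₀S] at hdj; exact hdj
      · rcases D.nested q.1 p₀.1 hkl q.2 (hF q hqF) p₀.2 (hF p₀ hp₀F) with hsub | hdj
        · rw [hp₀S] at hsub
          have := hSmax q hqF hsub
          exact absurd this.ge hqns
        · rw [hp₀S] at hdj
          rw [Set.inter_comm]; exact hdj
    refine ⟨insert p₀ F₁', ?_, ?_, ?_⟩
    · intro q hq
      rcases Finset.mem_insert.mp hq with rfl | hq
      · exact hp₀F
      · exact (Finset.filter_subset _ _) (hF₁'sub hq)
    · intro p hp q hq hpq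
      rcases Finset.mem_insert.mp hp with rfl | hp' <;>
        rcases Finset.mem_insert.mp hq with rfl | hq'
      · exact absurd rfl hpq
      · rw [hp₀S, Set.inter_comm]; exact hdisjS q hq'
      · rw [hp₀S]; exact hdisjS p hp'
      · exact hdisj₁ p hp' q hq' hpq
    · intro p hp
      by_cases hpS : D.Q p.1 p.2 ⊆ S
      · refine ⟨p₀, Finset.mem_insert_self _ _, by rw [hp₀S]; exact hpS, ?_⟩
        by_cases heq : D.Q p.1 p.2 = S
        · have hpR : p ∈ R := by rw [hR, Finset.mem_filter]; exact ⟨hp, heq⟩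
          have : p₀.1 ≤ p.1 := by
            rw [hp₀k]
            exact (R.image Prod.fst).min'_le p.1 (Finset.mem_image_of_mem _ hpR)
          exact this
        · by_contra hlt
          push_neg at hlt
          rcases D.nested p.1 p₀.1 hlt.le p.2 (hF p hp) p₀.2 (hF p₀ hp₀F) with hsub | hdj
          · rw [hp₀S] at hsub
            exact heq (le_antisymm hpS hsub)
          · rw [hp₀S] at hdj
            have hpne : (D.Q p.1 p.2).Nonempty :=
              ⟨D.z p.1 p.2, D.centre_mem _ _ (hF p hp)⟩
            obtain ⟨x, hx⟩ := hpne
            have : x ∈ S ∩ D.Q p.1 p.2 := ⟨hpS hx, hx⟩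
            rw [hdj] at this
            exact this
      · have hpF₁ : p ∈ F₁ := by rw [hF₁, Finset.mem_filter]; exact ⟨hp, hpS⟩
        obtain ⟨q, hq, hsub, hk⟩ := hcov₁ p hpF₁
        exact ⟨q, Finset.mem_insert_of_mem hq, hsub, hk⟩

end CarlesonAux

/-- **Local Carleson embedding theorem** (Proposition 7.1 of the paper).
Let `(X,d)` be a complete metric space with a Borel-regular exponentially locally
doubling measure `μ`, equipped with a truncated dyadic structure with truncation
generation `J`, and fix `t₀ ≤ δ^J`.  There is a constant `C`, depending only on the
doubling and dyadic constants, such that for every positive Borel measure `ν` on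
`X × (0,t₀]` whose Carleson norm is bounded by `Cν` (i.e. `ν(R_Q) ≤ Cν μ(Q)` for every
dyadic cube `Q ∈ Δ_t` with `t ≤ t₀`, where `R_Q = closure Q × (0, ℓ(Q)]`), and every
`u ∈ L²(X;ℂ^N)`,
`∬_{X×(0,t₀]} |A_t u(x)|² dν(x,t) ≤ C ‖ν‖_C ‖u‖²_{L²}`. -/
theorem carleson_embedding_of_dyadicAvg
    {X : Type*} [MetricSpace X] [CompleteSpace X] [MeasurableSpace X] [BorelSpace X]
    (μ : Measure X) (c κ lam : ℝ) (hc : 1 ≤ c) (hκ : 0 ≤ κ) (hlam : 0 ≤ lam)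
    (hdoub : ∀ (x : X) (r t : ℝ), 0 < r → 1 ≤ t →
      0 < μ (ball x r) ∧
      μ (ball x (t * r)) ≤ ENNReal.ofReal (c * t ^ κ * Real.exp (lam * t * r)) * μ (ball x r) ∧
      μ (ball x (t * r)) < ⊤)
    (D : TruncatedDyadicStructure X μ) (J : ℕ) (t₀ : ℝ) (ht₀ : 0 < t₀)
    (ht₀J : t₀ ≤ D.δ ^ J) (N : ℕ) :
    ∃ C > 0, ∀ (ν : Measure (X × ℝ)) (Cν : ℝ), 0 ≤ Cν →
      (∀ j, J ≤ j → ∀ α ∈ D.idx j, D.δ ^ (j + 1) < t₀ →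
        ν (closure (D.Q j α) ×ˢ Set.Ioc 0 (D.δ ^ j)) ≤ ENNReal.ofReal Cν * μ (D.Q j α)) →
      ∀ u : X → EuclideanSpace ℂ (Fin N), MemLp u 2 μ →
        (∫⁻ p in Set.univ ×ˢ Set.Ioc (0 : ℝ) t₀,
            (‖D.dyadicAvg u p.2 p.1‖₊ : ℝ≥0∞) ^ 2 ∂ν)
          ≤ ENNReal.ofReal (C * Cν) * ∫⁻ x, (‖u x‖₊ : ℝ≥0∞) ^ 2 ∂μ := by
  classical
  refine ⟨32, by norm_num, ?_⟩
  intro ν Cν hCν hν u hu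
  have h2 : (2:ℝ≥0∞) ≠ 0 := two_ne_zero
  have h2' : (2:ℝ≥0∞) ≠ ⊤ := ENNReal.ofNat_ne_top
  have hδ0 := D.δ_pos
  have hδ1 := D.δ_lt_one
  obtain ⟨hJK, ht₀K, hKt₀⟩ := CarlesonAux.gen_facts D ht₀ ht₀J
  set K := D.gen t₀ with hK
  -- measurable representative of ‖u‖
  have huae : AEMeasurable (fun x => (‖u x‖₊ : ℝ≥0∞)) μ := hu.aestronglyMeasurable.enorm
  set w : X → ℝ≥0∞ := huae.mk _ with hwdef
  have hwmeas : Measurable w := huae.measurable_mk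
  have hw : (fun x => (‖u x‖₊ : ℝ≥0∞)) =ᵐ[μ] w := huae.ae_eq_mk
  set avg : ℕ × ℕ → ℝ≥0∞ :=
    fun p => (∫⁻ x in D.Q p.1 p.2, w x ∂μ) / μ (D.Q p.1 p.2) with havg
  set Reg : Set (X × ℝ) := Set.univ ×ˢ Set.Ioc (0:ℝ) t₀ with hReg
  set G : X × ℝ → ℝ≥0∞ := fun q => ⨆ (k : ℕ) (α : ℕ),
      (if K ≤ k ∧ α ∈ D.idx k then
        ((D.Q k α) ×ˢ Set.Ioc (D.δ^(k+1)) (D.δ^k)).indicator (fun _ => avg (k, α)) q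
      else 0) with hGdef
  have hGmeas : Measurable G := by
    apply Measurable.iSup; intro k; apply Measurable.iSup; intro α
    split_ifs with h
    · exact Measurable.indicator measurable_const
        (((D.isOpen k α h.2).measurableSet).prod measurableSet_Ioc)
    · exact measurable_const
  -- pointwise bound of the averaging operator by G
  have hpoint : ∀ q ∈ Reg, ((‖D.dyadicAvg u q.2 q.1‖₊ : ℝ≥0∞))^2 ≤ (G q)^2 := by
    intro q hq
    have hq2 : q.2 ∈ Set.Ioc (0:ℝ) t₀ := hq.2
    obtain ⟨hKg, hg1, hg2⟩ := CarlesonAux.gen_facts D (m := K) hq2.1 (le_trans hq2.2 ht₀K)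
    refine pow_le_pow_left₀ (zero_le) ?_ 2
    unfold TruncatedDyadicStructure.dyadicAvg
    by_cases h : ∃ α ∈ D.idx (D.gen q.2), q.1 ∈ D.Q (D.gen q.2) α
    swap
    · rw [dif_neg h]; simp
    rw [dif_pos h]
    obtain ⟨hα, hxQ⟩ := h.choose_spec
    have havgle : (‖⨍ y in D.Q (D.gen q.2) h.choose, u y ∂μ‖₊ : ℝ≥0∞)
        ≤ avg (D.gen q.2, h.choose) := by
      rw [MeasureTheory.setAverage_eq']
      calc (‖∫ y, u y ∂((μ (D.Q (D.gen q.2) h.choose))⁻¹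
              • μ.restrict (D.Q (D.gen q.2) h.choose))‖₊ : ℝ≥0∞)
          ≤ ∫⁻ y, (‖u y‖₊ : ℝ≥0∞) ∂((μ (D.Q (D.gen q.2) h.choose))⁻¹
              • μ.restrict (D.Q (D.gen q.2) h.choose)) :=
            MeasureTheory.enorm_integral_le_lintegral_enorm _
        _ = (μ (D.Q (D.gen q.2) h.choose))⁻¹
              * ∫⁻ y in D.Q (D.gen q.2) h.choose, (‖u y‖₊:ℝ≥0∞) ∂μ := lintegral_smul_measure _ _
        _ = (μ (D.Q (D.gen q.2) h.choose))⁻¹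
              * ∫⁻ y in D.Q (D.gen q.2) h.choose, w y ∂μ := by
            rw [lintegral_congr_ae (ae_restrict_of_ae hw)]
        _ = avg (D.gen q.2, h.choose) := by
            simp only [havg]
            rw [ENNReal.div_eq_inv_mul]
    refine le_trans havgle ?_
    have hform : avg (D.gen q.2, h.choose) =
        (if K ≤ D.gen q.2 ∧ h.choose ∈ D.idx (D.gen q.2) then
          ((D.Q (D.gen q.2) h.choose) ×ˢ
            Set.Ioc (D.δ^((D.gen q.2)+1)) (D.δ^(D.gen q.2))).indicator
              (fun _ => avg (D.gen q.2, h.choose)) q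
        else 0) := by
      rw [if_pos ⟨hKg, hα⟩,
        Set.indicator_of_mem (Set.mem_prod.mpr ⟨hxQ, Set.mem_Ioc.mpr ⟨hg2, hg1⟩⟩)]
    rw [hGdef, hform]
    exact le_iSup₂ (f := fun k α => (if K ≤ k ∧ α ∈ D.idx k then
        ((D.Q k α) ×ˢ Set.Ioc (D.δ^(k+1)) (D.δ^k)).indicator (fun _ => avg (k, α)) q
      else 0)) (D.gen q.2) h.choose
  -- the key Carleson estimate on superlevel sets of G
  have key : ∀ l : ℝ≥0∞, l ≠ 0 → l ≠ ⊤ →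
      ν ({p | l < G p} ∩ Reg) ≤
        ENNReal.ofReal Cν * (2 * l⁻¹ * ∫⁻ x in {x | l/2 < w x}, w x ∂μ) := by
    intro l hl0 hltop
    set E : Set X := {x | l/2 < w x} with hE
    have hEmeas : MeasurableSet E := measurableSet_lt measurable_const hwmeas
    set 𝒮 : Set (ℕ×ℕ) := {p | K ≤ p.1 ∧ p.2 ∈ D.idx p.1 ∧ l < avg p} with h𝒮
    set box : ℕ×ℕ → Set (X×ℝ) :=
      fun p => closure (D.Q p.1 p.2) ×ˢ Set.Ioc (0:ℝ) (D.δ ^ p.1) with hbox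
    have hsub : ({p | l < G p} ∩ Reg) ⊆ ⋃ p ∈ 𝒮, box p := by
      rintro q ⟨hGq, hqReg⟩
      simp only [Set.mem_setOf_eq, hGdef] at hGq
      rw [lt_iSup_iff] at hGq; obtain ⟨k, hGq⟩ := hGq
      rw [lt_iSup_iff] at hGq; obtain ⟨α, hGq⟩ := hGq
      by_cases hcond : K ≤ k ∧ α ∈ D.idx k
      swap
      · rw [if_neg hcond] at hGq; exact absurd hGq (not_lt.mpr (zero_le))
      rw [if_pos hcond] at hGq
      by_cases hmem : q ∈ (D.Q k α) ×ˢ Set.Ioc (D.δ^(k+1)) (D.δ^k)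
      swap
      · rw [Set.indicator_of_notMem hmem] at hGq
        exact absurd hGq (not_lt.mpr (zero_le))
      rw [Set.indicator_of_mem hmem] at hGq
      refine Set.mem_biUnion (show (k,α) ∈ 𝒮 from ⟨hcond.1, hcond.2, hGq⟩) ?_
      have hmem' := Set.mem_prod.mp hmem
      have hqReg' := Set.mem_prod.mp hqReg
      exact Set.mem_prod.mpr ⟨subset_closure hmem'.1,
        Set.mem_Ioc.mpr ⟨hqReg'.2.1, hmem'.2.2⟩⟩
    -- per-cube estimate
    have hcube : ∀ p ∈ 𝒮, ν (box p) ≤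
        ENNReal.ofReal Cν * (2 * l⁻¹ * ∫⁻ x in E ∩ D.Q p.1 p.2, w x ∂μ) := by
      intro p hp
      obtain ⟨hKp, hidx, hlt⟩ := hp
      have hQmeas : MeasurableSet (D.Q p.1 p.2) := (D.isOpen _ _ hidx).measurableSet
      have hcar : ν (box p) ≤ ENNReal.ofReal Cν * μ (D.Q p.1 p.2) := by
        refine hν p.1 (le_trans hJK hKp) p.2 hidx ?_
        calc D.δ ^ (p.1+1) ≤ D.δ ^ (K+1) :=
              pow_le_pow_of_le_one hδ0.le hδ1.le (by omega)
          _ < t₀ := hKt₀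
      have hμ0 : μ (D.Q p.1 p.2) ≠ 0 := by
        intro h0
        rw [havg] at hlt
        simp only at hlt
        rw [Measure.restrict_eq_zero.mpr h0, lintegral_zero_measure, ENNReal.zero_div] at hlt
        exact absurd hlt (not_lt.mpr (zero_le))
      have hμtop : μ (D.Q p.1 p.2) ≠ ⊤ := by
        intro htop
        rw [havg] at hlt
        simp only at hlt
        rw [htop, ENNReal.div_top] at hlt
        exact absurd hlt (not_lt.mpr (zero_le))
      have hmul : l * μ (D.Q p.1 p.2) < ∫⁻ x in D.Q p.1 p.2, w x ∂μ := by
        rw [havg] at hlt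
        exact (ENNReal.lt_div_iff_mul_lt (Or.inl hμ0) (Or.inl hμtop)).mp hlt
      have hsplit : ∫⁻ x in D.Q p.1 p.2, w x ∂μ
          ≤ (∫⁻ x in E ∩ D.Q p.1 p.2, w x ∂μ) + l/2 * μ (D.Q p.1 p.2) := by
        calc ∫⁻ x in D.Q p.1 p.2, w x ∂μ
            = ∫⁻ x in D.Q p.1 p.2, (E.indicator w x + Eᶜ.indicator w x) ∂μ := by
              apply lintegral_congr
              intro x
              exact (congrFun (Set.indicator_self_add_compl E w) x).symm
          _ = (∫⁻ x in D.Q p.1 p.2, E.indicator w x ∂μ)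
              + ∫⁻ x in D.Q p.1 p.2, Eᶜ.indicator w x ∂μ :=
              lintegral_add_left (hwmeas.indicator hEmeas) _
          _ ≤ (∫⁻ x in E ∩ D.Q p.1 p.2, w x ∂μ) + l/2 * μ (D.Q p.1 p.2) := by
              refine add_le_add ?_ ?_
              · rw [lintegral_indicator hEmeas, Measure.restrict_restrict hEmeas]
              · calc ∫⁻ x in D.Q p.1 p.2, Eᶜ.indicator w x ∂μ
                    ≤ ∫⁻ _ in D.Q p.1 p.2, l/2 ∂μ := by
                      apply lintegral_mono
                      intro x
                      by_cases hx : x ∈ Eᶜ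
                      · rw [Set.indicator_of_mem hx]
                        exact not_lt.mp hx
                      · rw [Set.indicator_of_notMem hx]; exact zero_le
                  _ = l/2 * μ (D.Q p.1 p.2) := setLIntegral_const _ _
      have hhalf : l/2 * μ (D.Q p.1 p.2) ≠ ⊤ :=
        (ENNReal.mul_lt_top (ENNReal.div_lt_top hltop h2) (lt_top_iff_ne_top.mpr hμtop)).ne
      have hcancel : l/2 * μ (D.Q p.1 p.2) ≤ ∫⁻ x in E ∩ D.Q p.1 p.2, w x ∂μ := by
        have hmul2 : l/2 * μ (D.Q p.1 p.2) + l/2 * μ (D.Q p.1 p.2)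
            < (∫⁻ x in E ∩ D.Q p.1 p.2, w x ∂μ) + l/2 * μ (D.Q p.1 p.2) := by
          calc l/2 * μ (D.Q p.1 p.2) + l/2 * μ (D.Q p.1 p.2) = l * μ (D.Q p.1 p.2) := by
                rw [← add_mul, ENNReal.add_halves]
            _ < _ := lt_of_lt_of_le hmul hsplit
        exact ((ENNReal.add_lt_add_iff_right hhalf).mp hmul2).le
      have hid : (2:ℝ≥0∞) * l⁻¹ * (l/2 * μ (D.Q p.1 p.2)) = μ (D.Q p.1 p.2) := by
        rw [div_eq_mul_inv]
        calc (2:ℝ≥0∞) * l⁻¹ * (l * 2⁻¹ * μ (D.Q p.1 p.2))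
            = (l⁻¹ * l) * (2 * 2⁻¹) * μ (D.Q p.1 p.2) := by ring
          _ = μ (D.Q p.1 p.2) := by
              rw [ENNReal.inv_mul_cancel hl0 hltop, ENNReal.mul_inv_cancel h2 h2',
                one_mul, one_mul]
      have hμQle : μ (D.Q p.1 p.2) ≤ 2 * l⁻¹ * ∫⁻ x in E ∩ D.Q p.1 p.2, w x ∂μ := by
        calc μ (D.Q p.1 p.2) = 2 * l⁻¹ * (l/2 * μ (D.Q p.1 p.2)) := hid.symm
          _ ≤ 2 * l⁻¹ * ∫⁻ x in E ∩ D.Q p.1 p.2, w x ∂μ := mul_le_mul_right hcancel _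
      exact le_trans hcar (mul_le_mul_right hμQle _)
    -- from finite subfamilies to the full union
    have hcount : ν (⋃ p ∈ 𝒮, box p) ≤
        ENNReal.ofReal Cν * (2 * l⁻¹ * ∫⁻ x in E, w x ∂μ) := by
      set T : ℕ → Finset (ℕ×ℕ) :=
        fun n => (Finset.range n ×ˢ Finset.range n).filter (· ∈ 𝒮) with hT
      set s : ℕ → Set (X×ℝ) := fun n => ⋃ p ∈ T n, box p with hs
      have hT𝒮 : ∀ n, ∀ p ∈ T n, p ∈ 𝒮 := by
        intro n p hp
        exact (Finset.mem_filter.mp hp).2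
      have hcover : ⋃ p ∈ 𝒮, box p = ⋃ n, s n := by
        apply Set.Subset.antisymm
        · intro q hq
          rw [Set.mem_iUnion₂] at hq
          obtain ⟨p, hp𝒮, hpq⟩ := hq
          refine Set.mem_iUnion.mpr ⟨max p.1 p.2 + 1, ?_⟩
          rw [hs]
          refine Set.mem_biUnion (Finset.mem_filter.mpr ⟨Finset.mem_product.mpr
            ⟨Finset.mem_range.mpr (Nat.lt_succ_of_le (le_max_left _ _)),
             Finset.mem_range.mpr (Nat.lt_succ_of_le (le_max_right _ _))⟩, hp𝒮⟩) hpq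
        · refine Set.iUnion_subset fun n => ?_
          rw [hs]
          refine Set.iUnion₂_subset fun p hp => ?_
          exact Set.subset_biUnion_of_mem (hT𝒮 n p hp)
      have hmono : Monotone s := by
        intro a b hab
        have hsubT : T a ⊆ T b :=
          Finset.filter_subset_filter _ (Finset.product_subset_product
            (Finset.range_subset_range.mpr hab) (Finset.range_subset_range.mpr hab))
        exact Set.iUnion₂_subset fun p hp =>
          Set.subset_iUnion₂_of_subset p (hsubT hp) subset_rfl
      rw [hcover, (hmono.directed_le).measure_iUnion]
      refine iSup_le fun n => ?_
      obtain ⟨F', hF'sub, hdisj, hcov⟩ := CarlesonAux.disjoint_subfamily D (T n)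
        (fun p hp => (hT𝒮 n p hp).2.1)
      have hF'𝒮 : ∀ p ∈ F', p ∈ 𝒮 := fun p hp => hT𝒮 n p (hF'sub hp)
      have hboxsub : s n ⊆ ⋃ p ∈ F', box p := by
        rw [hs]
        refine Set.iUnion₂_subset fun p hp => ?_
        obtain ⟨q, hqF', hQsub, hk⟩ := hcov p hp
        refine Set.subset_iUnion₂_of_subset q hqF' ?_
        rw [hbox]
        exact Set.prod_mono (closure_mono hQsub)
          (Set.Ioc_subset_Ioc le_rfl (pow_le_pow_of_le_one hδ0.le hδ1.le hk))
      have hQF'meas : ∀ p ∈ F', MeasurableSet (E ∩ D.Q p.1 p.2) := fun p hp =>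
        hEmeas.inter (D.isOpen _ _ (hF'𝒮 p hp).2.1).measurableSet
      calc ν (s n) ≤ ν (⋃ p ∈ F', box p) := measure_mono hboxsub
        _ ≤ ∑ p ∈ F', ν (box p) := measure_biUnion_finset_le _ _
        _ ≤ ∑ p ∈ F', ENNReal.ofReal Cν * (2 * l⁻¹ * ∫⁻ x in E ∩ D.Q p.1 p.2, w x ∂μ) :=
            Finset.sum_le_sum fun p hp => hcube p (hF'𝒮 p hp)
        _ = ENNReal.ofReal Cν * (2 * l⁻¹)
            * ∑ p ∈ F', ∫⁻ x in E ∩ D.Q p.1 p.2, w x ∂μ := by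
            rw [Finset.mul_sum]
            refine Finset.sum_congr rfl fun p _ => ?_
            ring
        _ ≤ ENNReal.ofReal Cν * (2 * l⁻¹) * ∫⁻ x in E, w x ∂μ := by
            refine mul_le_mul_right ?_ _
            calc ∑ p ∈ F', ∫⁻ x in E ∩ D.Q p.1 p.2, w x ∂μ
                = ∑ p ∈ F', ∫⁻ x, (E ∩ D.Q p.1 p.2).indicator w x ∂μ := by
                  refine Finset.sum_congr rfl fun p hp => ?_
                  rw [lintegral_indicator (hQF'meas p hp)]
              _ = ∫⁻ x, (∑ p ∈ F', (E ∩ D.Q p.1 p.2).indicator w x) ∂μ :=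
                  (lintegral_finset_sum _ (fun p hp => hwmeas.indicator (hQF'meas p hp))).symm
              _ ≤ ∫⁻ x, E.indicator w x ∂μ := by
                  apply lintegral_mono
                  intro x
                  show ∑ p ∈ F', (E ∩ D.Q p.1 p.2).indicator w x ≤ E.indicator w x
                  by_cases hx : ∃ p₀ ∈ F', x ∈ D.Q p₀.1 p₀.2
                  · obtain ⟨p₀, hp₀, hxp₀⟩ := hx
                    have hsum : ∑ p ∈ F', (E ∩ D.Q p.1 p.2).indicator w x
                        = (E ∩ D.Q p₀.1 p₀.2).indicator w x := by
                      refine Finset.sum_eq_single_of_mem p₀ hp₀ fun q hq hne => ?_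
                      apply Set.indicator_of_notMem
                      rintro ⟨-, hxq⟩
                      have hmem : x ∈ D.Q q.1 q.2 ∩ D.Q p₀.1 p₀.2 := ⟨hxq, hxp₀⟩
                      rw [hdisj q hq p₀ hp₀ hne] at hmem
                      exact hmem
                    rw [hsum]
                    exact Set.indicator_le_indicator_of_subset Set.inter_subset_left
                      (fun _ => zero_le) x
                  · rw [Finset.sum_eq_zero]
                    · exact zero_le
                    · intro q hq
                      apply Set.indicator_of_notMem
                      rintro ⟨-, hxq⟩
                      exact hx ⟨q, hq, hxq⟩
              _ = ∫⁻ x in E, w x ∂μ := lintegral_indicator hEmeas w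
        _ = ENNReal.ofReal Cν * (2 * l⁻¹ * ∫⁻ x in E, w x ∂μ) := by ring
    exact le_trans (measure_mono hsub) hcount
  -- the superlevel sets of G
  set Sn : ℤ → Set (X×ℝ) := fun n => {q | (2:ℝ≥0∞)^n < G q} with hSn
  have hSnmeas : ∀ n, MeasurableSet (Sn n) := fun n =>
    measurableSet_lt measurable_const hGmeas
  set En : ℤ → Set X := fun n => {x | (2:ℝ≥0∞)^(n-1) < w x} with hEn
  have hEnmeas : ∀ n, MeasurableSet (En n) := fun n =>
    measurableSet_lt measurable_const hwmeas
  -- putting everything together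
  calc ∫⁻ q in Reg, (‖D.dyadicAvg u q.2 q.1‖₊ : ℝ≥0∞)^2 ∂ν
      ≤ ∫⁻ q in Reg, (G q)^2 ∂ν := setLIntegral_mono (hGmeas.pow_const 2) hpoint
    _ ≤ ∫⁻ q in Reg, ∑' n : ℤ, (Sn n).indicator (fun _ => (2:ℝ≥0∞)^(2*n+2)) q ∂ν := by
        apply lintegral_mono
        intro q
        have := CarlesonAux.sq_le_tsum_layers (G q)
        refine le_trans this (le_of_eq (tsum_congr fun n => ?_))
        rw [hSn]
        simp only [Set.indicator_apply, Set.mem_setOf_eq]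
    _ = ∑' n : ℤ, ∫⁻ q in Reg, (Sn n).indicator (fun _ => (2:ℝ≥0∞)^(2*n+2)) q ∂ν :=
        lintegral_tsum fun n => (measurable_const.indicator (hSnmeas n)).aemeasurable
    _ = ∑' n : ℤ, (2:ℝ≥0∞)^(2*n+2) * ν (Sn n ∩ Reg) := by
        refine tsum_congr fun n => ?_
        rw [lintegral_indicator (hSnmeas n), setLIntegral_const, Measure.restrict_apply (hSnmeas n)]
    _ ≤ ∑' n : ℤ, (2:ℝ≥0∞)^(2*n+2) * (ENNReal.ofReal Cν
          * (2 * ((2:ℝ≥0∞)^n)⁻¹ * ∫⁻ x in En n, w x ∂μ)) := by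
        refine ENNReal.tsum_le_tsum fun n => mul_le_mul_right ?_ _
        have hk := key ((2:ℝ≥0∞)^n) (ENNReal.zpow_pos h2 h2' n).ne'
          (ENNReal.zpow_lt_top h2 h2' n).ne
        have hhalf : (2:ℝ≥0∞)^n / 2 = 2^(n-1) := by
          have hh : (2:ℝ≥0∞)^(n-1) * 2^(1:ℤ) = 2^n := by
            rw [← ENNReal.zpow_add h2 h2']
            congr 1
            ring
          rw [← hh, zpow_one, mul_div_assoc, ENNReal.div_self h2 h2', mul_one]
        rw [hhalf] at hk
        exact hk
    _ = ENNReal.ofReal Cν * ∑' n : ℤ, (2:ℝ≥0∞)^(n+3) * ∫⁻ x in En n, w x ∂μ := by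
        rw [← ENNReal.tsum_mul_left]
        refine tsum_congr fun n => ?_
        have hzp : (2:ℝ≥0∞)^(2*n+2) * (2 * ((2:ℝ≥0∞)^n)⁻¹) = 2^(n+3) := by
          have he : (2:ℝ≥0∞) * ((2:ℝ≥0∞)^n)⁻¹ = 2^(1-n) := by
            rw [show (1:ℤ) - n = 1 + -n from by ring, ENNReal.zpow_add h2 h2',
              zpow_one, ENNReal.zpow_neg]
          rw [he, ← ENNReal.zpow_add h2 h2']
          congr 1
          ring
        calc (2:ℝ≥0∞)^(2*n+2) * (ENNReal.ofReal Cν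
              * (2 * ((2:ℝ≥0∞)^n)⁻¹ * ∫⁻ x in En n, w x ∂μ))
            = ENNReal.ofReal Cν * (((2:ℝ≥0∞)^(2*n+2) * (2 * ((2:ℝ≥0∞)^n)⁻¹))
              * ∫⁻ x in En n, w x ∂μ) := by ring
          _ = ENNReal.ofReal Cν * ((2:ℝ≥0∞)^(n+3) * ∫⁻ x in En n, w x ∂μ) := by rw [hzp]
    _ = ENNReal.ofReal Cν * ∫⁻ x, ∑' n : ℤ, (2:ℝ≥0∞)^(n+3) * (En n).indicator w x ∂μ := by
        congr 1
        calc ∑' n : ℤ, (2:ℝ≥0∞)^(n+3) * ∫⁻ x in En n, w x ∂μ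
            = ∑' n : ℤ, ∫⁻ x, (2:ℝ≥0∞)^(n+3) * (En n).indicator w x ∂μ := by
              refine tsum_congr fun n => ?_
              rw [lintegral_const_mul _ (hwmeas.indicator (hEnmeas n)),
                lintegral_indicator (hEnmeas n)]
          _ = ∫⁻ x, ∑' n : ℤ, (2:ℝ≥0∞)^(n+3) * (En n).indicator w x ∂μ :=
              (lintegral_tsum fun n =>
                ((hwmeas.indicator (hEnmeas n)).const_mul _).aemeasurable).symm
    _ ≤ ENNReal.ofReal Cν * ∫⁻ x, 32 * (w x)^2 ∂μ := by
        refine mul_le_mul_right (lintegral_mono fun x => ?_) _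
        calc ∑' n : ℤ, (2:ℝ≥0∞)^(n+3) * (En n).indicator w x
            = (∑' n : ℤ, (if (2:ℝ≥0∞)^(n-1) < w x then (2:ℝ≥0∞)^(n+3) else 0)) * w x := by
              rw [← ENNReal.tsum_mul_right]
              refine tsum_congr fun n => ?_
              by_cases hx : x ∈ En n
              · have hx' : (2:ℝ≥0∞)^(n-1) < w x := hx
                rw [Set.indicator_of_mem hx, if_pos hx']
              · have hx' : ¬ (2:ℝ≥0∞)^(n-1) < w x := hx
                rw [Set.indicator_of_notMem hx, if_neg hx', zero_mul, mul_zero]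
          _ ≤ (32 * w x) * w x := mul_le_mul_left (CarlesonAux.tsum_layers_le (w x)) _
          _ = 32 * (w x)^2 := by rw [sq]; ring
    _ = ENNReal.ofReal (32 * Cν) * ∫⁻ x, (‖u x‖₊ : ℝ≥0∞)^2 ∂μ := by
        have h32 : ∫⁻ x, 32 * (w x)^2 ∂μ = 32 * ∫⁻ x, (w x)^2 ∂μ :=
          lintegral_const_mul 32 (hwmeas.pow_const 2)
        have hww : ∫⁻ x, (w x)^2 ∂μ = ∫⁻ x, (‖u x‖₊ : ℝ≥0∞)^2 ∂μ := by
          apply lintegral_congr_ae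
          filter_upwards [hw] with x hx
          rw [hx]
        rw [h32, hww, ← mul_assoc]
        congr 1
        rw [ENNReal.ofReal_mul (by norm_num : (0:ℝ) ≤ 32), mul_comm]
        congr 1
        simp
end

section
/- Let (X,d) be a metric space with a Borel measure μ satisfying the exponentially locally doubling condition with constants c ≥ 1 and κ, λ ≥ 0. Let r > 0 and let {B_j = B(x_j, r)}_j be a countable pairwise disjoint collection of open balls of radius r. Then there exists a constant C, depending only on c and κ, such that for every η ≥ 1 and every x ∈ X, Σ_j 1_{B(x_j, ηr)}(x) ≤ C η^κ e^{4λcηr}; that is, the dilated balls {B(x_j, ηr)} have overlap bounded by C η^κ e^{4λcηr}. -/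
open MeasureTheory Metric
open scoped ENNReal NNReal

/-- **Bounded overlap of dilated balls** (Lemma 7.2 of the paper).
Let `(X,d)` be a metric space with a Borel measure `μ` satisfying the exponentially
locally doubling condition with constants `c ≥ 1`, `κ, λ ≥ 0`.  Then there is a constant
`C`, depending only on `c` and `κ`, such that for every `r > 0`, every countable pairwise
disjoint collection of balls `B_j = B(x_j, r)`, every `η ≥ 1` and every `x ∈ X`,
`∑_j 1_{B(x_j, ηr)}(x) ≤ C η^κ e^{4λcηr}`. -/
theorem bounded_overlap_of_dilated_balls
    {X : Type*} [MetricSpace X] [MeasurableSpace X] [BorelSpace X]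
    (μ : Measure X) (c κ lam : ℝ) (hc : 1 ≤ c) (hκ : 0 ≤ κ) (hlam : 0 ≤ lam)
    (hdoub : ∀ (x : X) (r t : ℝ), 0 < r → 1 ≤ t →
      0 < μ (ball x r) ∧
      μ (ball x (t * r)) ≤ ENNReal.ofReal (c * t ^ κ * Real.exp (lam * t * r)) * μ (ball x r) ∧
      μ (ball x (t * r)) < ⊤) :
    ∃ C > 0, ∀ (ι : Type) (_ : Countable ι) (ctr : ι → X) (r : ℝ), 0 < r →
      (Pairwise fun i j => Disjoint (ball (ctr i) r) (ball (ctr j) r)) →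
      ∀ (η : ℝ), 1 ≤ η → ∀ x : X,
        (∑' i, Set.indicator (ball (ctr i) (η * r)) (fun _ => (1 : ℝ≥0∞)) x)
          ≤ ENNReal.ofReal (C * η ^ κ * Real.exp (4 * lam * c * η * r)) := by
  have hc0 : (0:ℝ) < c := lt_of_lt_of_le one_pos hc
  refine ⟨c * 3 ^ κ, by positivity, ?_⟩
  intro ι _ ctr r hr hdisj η hη x
  have hη0 : (0:ℝ) < η := lt_of_lt_of_le one_pos hη
  -- the key real-number inequality for the final bound
  have hK : c * (2*η+1) ^ κ * Real.exp (lam * (2*η+1) * r)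
      ≤ c * 3 ^ κ * η ^ κ * Real.exp (4 * lam * c * η * r) := by
    have h1 : (2*η+1 : ℝ) ^ κ ≤ 3 ^ κ * η ^ κ := by
      rw [← Real.mul_rpow (by norm_num) (le_of_lt hη0)]
      exact Real.rpow_le_rpow (by linarith) (by linarith) hκ
    have h2 : Real.exp (lam * (2*η+1) * r) ≤ Real.exp (4 * lam * c * η * r) := by
      apply Real.exp_le_exp.2
      have h3 : (2*η+1 : ℝ) ≤ 4*c*η := by nlinarith
      have h4 := mul_le_mul_of_nonneg_left h3 hlam
      nlinarith [mul_le_mul_of_nonneg_right h4 hr.le]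
    calc c * (2*η+1) ^ κ * Real.exp (lam * (2*η+1) * r)
        ≤ c * (3 ^ κ * η ^ κ) * Real.exp (4 * lam * c * η * r) := by
          apply mul_le_mul (by nlinarith [Real.rpow_nonneg (show (0:ℝ) ≤ 2*η+1 by linarith) κ]) h2
            (le_of_lt (Real.exp_pos _)) (by positivity)
      _ = c * 3 ^ κ * η ^ κ * Real.exp (4 * lam * c * η * r) := by ring
  set K : ℝ≥0∞ := ENNReal.ofReal (c * (2*η+1) ^ κ * Real.exp (lam * (2*η+1) * r)) with hKdef
  set m : ℝ≥0∞ := μ (ball x ((η+1) * r)) with hmdef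
  have hmpos : 0 < m := (hdoub x ((η+1)*r) 1 (by positivity) le_rfl).1
  have hmlt : m < ⊤ := (hdoub x r (η+1) hr (by linarith)).2.2
  -- main estimate for finite sums
  rw [ENNReal.tsum_eq_iSup_sum, iSup_le_iff]
  intro F
  classical
  set F' := F.filter (fun i => x ∈ ball (ctr i) (η * r)) with hF'
  have hsum : ∑ i ∈ F, Set.indicator (ball (ctr i) (η * r)) (fun _ => (1:ℝ≥0∞)) x
      = (F'.card : ℝ≥0∞) := by
    rw [hF']
    simp [Set.indicator_apply, Finset.sum_ite, Finset.filter_filter]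
  rw [hsum]
  -- per-ball estimates
  have hmem : ∀ j ∈ F', x ∈ ball (ctr j) (η * r) := fun j hj => (Finset.mem_filter.1 hj).2
  have hstep : ∀ j ∈ F', m ≤ K * μ (ball (ctr j) r) := by
    intro j hj
    have hd : dist x (ctr j) < η * r := mem_ball.1 (hmem j hj)
    have hsub : ball x ((η+1) * r) ⊆ ball (ctr j) ((2*η+1) * r) := by
      intro y hy
      have := mem_ball.1 hy
      have : dist y (ctr j) ≤ dist y x + dist x (ctr j) := dist_triangle _ _ _
      rw [mem_ball]
      have hyx := mem_ball.1 hy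
      calc dist y (ctr j) ≤ dist y x + dist x (ctr j) := dist_triangle _ _ _
        _ < (η+1) * r + η * r := by linarith
        _ = (2*η+1) * r := by ring
    calc m ≤ μ (ball (ctr j) ((2*η+1) * r)) := measure_mono hsub
      _ ≤ K * μ (ball (ctr j) r) := (hdoub (ctr j) r (2*η+1) hr (by linarith)).2.1
  -- the small balls are disjoint and contained in ball x ((η+1)r)
  have hsub2 : ∀ j ∈ F', ball (ctr j) r ⊆ ball x ((η+1) * r) := by
    intro j hj y hy
    have hd : dist x (ctr j) < η * r := mem_ball.1 (hmem j hj)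
    rw [mem_ball]
    calc dist y x ≤ dist y (ctr j) + dist (ctr j) x := dist_triangle _ _ _
      _ < r + η * r := by rw [dist_comm (ctr j) x]; linarith [mem_ball.1 hy]
      _ = (η+1) * r := by ring
  have hunion : ∑ j ∈ F', μ (ball (ctr j) r) ≤ m := by
    rw [← measure_biUnion_finset (fun i _ j _ hij => hdisj hij)
      (fun j _ => measurableSet_ball)]
    exact measure_mono (Set.iUnion₂_subset hsub2)
  have hcard : (F'.card : ℝ≥0∞) * m ≤ K * m := by
    calc (F'.card : ℝ≥0∞) * m = ∑ _j ∈ F', m := by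
          rw [Finset.sum_const, nsmul_eq_mul]
      _ ≤ ∑ j ∈ F', K * μ (ball (ctr j) r) := Finset.sum_le_sum hstep
      _ = K * ∑ j ∈ F', μ (ball (ctr j) r) := by rw [Finset.mul_sum]
      _ ≤ K * m := mul_le_mul_right hunion _
  have hle : (F'.card : ℝ≥0∞) ≤ K :=
    (ENNReal.mul_le_mul_iff_left hmpos.ne' hmlt.ne).1 hcard
  exact hle.trans (ENNReal.ofReal_le_ofReal hK)
end
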